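/- Let ν be a Borel measure on ℝ^d with c₀ 2^{−mn} ≤ ν(D_m^a) < ∞ for all a ∈ ℝⁿ and m ∈ ℤ, for some constant c₀ > 0. Then for all x, y, z, z₁, z₂ ∈ ℝ^d and m ∈ ℤ: 0 ≤ Λ_m^ν(x,z;y) ≤ C 2^{mn}, and |Λ_m^ν(x,z₁;y) − Λ_m^ν(x,z₂;y)| ≤ C 2^{m(n+1)} |z₁ − z₂|, where C depends only on n and c₀. -/

import Mathlib

open MeasureTheory Set Filter ENNReal NNReal

noncomputable section

/-- Euclidean space `ℝ^k`. -/
abbrev Euc (k : ℕ) : Type := EuclideanSpace ℝ (Fin k)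

/-- Projection `x ↦ x̃` onto the first `n` coordinates. -/
def projn (n d : ℕ) (h : n ≤ d) (x : Euc d) : Euc n := WithLp.toLp 2 (fun i : Fin n => x (Fin.castLE h i))

/-- An odd Calderón–Zygmund kernel of homogeneity `-n` on `ℝ^d`, with constant `CK`. -/
structure IsCZKernel (n d : ℕ) (CK : ℝ) (K : Euc d → ℝ) : Prop where
  pos : 0 < CK
  odd : ∀ x : Euc d, K (-x) = -K x
  diff : ∀ x : Euc d, x ≠ 0 → DifferentiableAt ℝ K x
  diff2 : ∀ x : Euc d, x ≠ 0 → DifferentiableAt ℝ (fderiv ℝ K) x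
  bound : ∀ x : Euc d, x ≠ 0 → |K x| ≤ CK / ‖x‖ ^ n
  fderiv_bound : ∀ x : Euc d, x ≠ 0 → ‖fderiv ℝ K x‖ ≤ CK / ‖x‖ ^ (n + 1)
  fderiv2_bound : ∀ x : Euc d, x ≠ 0 → ‖fderiv ℝ (fderiv ℝ K) x‖ ≤ CK / ‖x‖ ^ (n + 2)

/-- The smooth truncation profile `φ_ℝ`: a nondecreasing `C²` function with
`χ_{[3√n,∞)} ≤ φ_ℝ ≤ χ_{[2.1√n,∞)}` (extended by `0` to all of `ℝ`). -/
structure IsCutoff (n : ℕ) (φR : ℝ → ℝ) : Prop where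
  mono : Monotone φR
  smooth : ContDiff ℝ 2 φR
  nonneg : ∀ t : ℝ, 0 ≤ φR t
  le_one : ∀ t : ℝ, φR t ≤ 1
  eq_zero : ∀ t : ℝ, t < 2.1 * Real.sqrt n → φR t = 0
  eq_one : ∀ t : ℝ, 3 * Real.sqrt n ≤ t → φR t = 1

/-- `φ_ε(x) = φ_ℝ(|x̃|/ε)`. -/
def phiE (n d : ℕ) (h : n ≤ d) (φR : ℝ → ℝ) (ε : ℝ) (x : Euc d) : ℝ :=
  φR (‖projn n d h x‖ / ε)

/-- The map `u ↦ (u, A u)` from `ℝⁿ` to `ℝ^d`. -/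
def graphMap (n d : ℕ) (h : n ≤ d) (A : Euc n → Euc (d - n)) (u : Euc n) : Euc d :=
  WithLp.toLp 2 (fun i : Fin d => if hi : (i : ℕ) < n then u ⟨i, hi⟩
           else A u ⟨(i : ℕ) - n, by have := i.isLt; omega⟩)

/-- The graph `Γ` of `A`. -/
def graphSet (n d : ℕ) (h : n ≤ d) (A : Euc n → Euc (d - n)) : Set (Euc d) :=
  Set.range (graphMap n d h A)

/-- `H^n` restricted to the graph of `A`. -/
def graphMeasure (n d : ℕ) (h : n ≤ d) (A : Euc n → Euc (d - n)) : Measure (Euc d) :=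
  (μH[(n : ℝ)]).restrict (graphSet n d h A)

/-- The measure `f · H^n_Γ`. -/
def lipGraphMeasure (n d : ℕ) (h : n ≤ d) (A : Euc n → Euc (d - n)) (f : Euc d → ℝ) :
    Measure (Euc d) :=
  (graphMeasure n d h A).withDensity fun y => ENNReal.ofReal (f y)

/-- The smoothly truncated singular integral `T^ν_{φ_ε} f(x) = ∫ φ_ε(x-y) K(x-y) f(y) dν(y)`. -/
def Tphi (n d : ℕ) (h : n ≤ d) (φR : ℝ → ℝ) (K : Euc d → ℝ) (ν : Measure (Euc d))
    (f : Euc d → ℝ) (ε : ℝ) (x : Euc d) : ℝ :=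
  ∫ y, phiE n d h φR ε (x - y) * K (x - y) * f y ∂ν

/-- The `ρ`-variation of a family `G = {G ε}_{ε > 0}`. -/
def varRho (ρ : ℝ) (G : ℝ → ℝ) : ℝ≥0∞ :=
  ⨆ (ε : ℤ → ℝ) (_ : Antitone ε) (_ : ∀ m : ℤ, 0 < ε m),
    (∑' m : ℤ, (ENNReal.ofReal |G (ε (m + 1)) - G (ε m)|) ^ ρ) ^ (1 / ρ)

/-- The oscillation of a family `G = {G ε}_{ε > 0}` with respect to a fixed
sequence `r`. -/
def oscO (r : ℤ → ℝ) (G : ℝ → ℝ) : ℝ≥0∞ :=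
  ⨆ (ε : ℤ → ℝ) (δ : ℤ → ℝ)
    (_ : ∀ m : ℤ, r (m + 1) ≤ ε m ∧ ε m ≤ δ m ∧ δ m ≤ r m),
    (∑' m : ℤ, (ENNReal.ofReal |G (ε m) - G (δ m)|) ^ (2 : ℝ)) ^ (1 / 2 : ℝ)

/-- The `λ`-jump counting function of a family `G = {G ε}_{ε > 0}`. -/
def jumpN (lam : ℝ) (G : ℝ → ℝ) : ℝ≥0∞ :=
  ⨆ (N : ℕ) (_ : ∃ ε δ : ℕ → ℝ,
      (∀ i, i < N → 0 < ε i) ∧ (∀ i, i < N → ε i < δ i) ∧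
      (∀ i, i + 1 < N → δ i ≤ ε (i + 1)) ∧
      (∀ i, i < N → lam < |G (ε i) - G (δ i)|)), (N : ℝ≥0∞)

/-- The `ρ`-variation of a `ℤ`-indexed family. -/
def varRhoZ (ρ : ℝ) (G : ℤ → ℝ) : ℝ≥0∞ :=
  ⨆ (mk : ℤ → ℤ) (_ : Antitone mk),
    (∑' k : ℤ, (ENNReal.ofReal |G (mk (k + 1)) - G (mk k)|) ^ ρ) ^ (1 / ρ)

/-- The oscillation of a `ℤ`-indexed family with respect to a fixed integer sequence `r`. -/
def oscZ (r : ℤ → ℤ) (G : ℤ → ℝ) : ℝ≥0∞ :=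
  ⨆ (ε : ℤ → ℤ) (δ : ℤ → ℤ)
    (_ : ∀ m : ℤ, r (m + 1) ≤ ε m ∧ ε m ≤ δ m ∧ δ m ≤ r m),
    (∑' m : ℤ, (ENNReal.ofReal |G (ε m) - G (δ m)|) ^ (2 : ℝ)) ^ (1 / 2 : ℝ)

/-- A cube `a + [0,b)^n ⊆ ℝⁿ`. -/
def cubeSet (n : ℕ) (a : Euc n) (b : ℝ) : Set (Euc n) :=
  {u | ∀ i : Fin n, a i ≤ u i ∧ u i < a i + b}

/-- A "vertical" cube `D = D̃ × ℝ^{d-n}`, `D̃` a cube of `ℝⁿ`. -/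
def IsVCube (n d : ℕ) (h : n ≤ d) (D : Set (Euc d)) : Prop :=
  ∃ (a : Euc n) (b : ℝ), 0 < b ∧ D = {x : Euc d | projn n d h x ∈ cubeSet n a b}

/-- The half-open v-cube with center `z` (in `ℝⁿ`) and side length `ℓ`. -/
def vQ (n d : ℕ) (h : n ≤ d) (z : Euc n) (ℓ : ℝ) : Set (Euc d) :=
  {x : Euc d | ∀ i : Fin n,
    z i - ℓ / 2 ≤ projn n d h x i ∧ projn n d h x i < z i + ℓ / 2}

/-- The cylinder `B(z̃_Q, C_Γ ℓ(Q)) × ℝ^{d-n}` associated with the v-cube of center `z`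
and side length `ℓ`. -/
def BQ (n d : ℕ) (h : n ≤ d) (CΓ : ℝ) (z : Euc n) (ℓ : ℝ) : Set (Euc d) :=
  {x : Euc d | dist (projn n d h x) z ≤ CΓ * ℓ}

/-- The grid cube `D_m^a = (a + [0, 2^{-m})^n) × ℝ^{d-n}`. -/
def Dgrid (n d : ℕ) (h : n ≤ d) (a : Euc n) (m : ℤ) : Set (Euc d) :=
  {x : Euc d | projn n d h x ∈ cubeSet n a ((2 : ℝ) ^ (-m))}

/-- The center of the dyadic cube `2^{-m}(k + [0,1)^n)`. -/
def dyadicCenter (n : ℕ) (m : ℤ) (k : Fin n → ℤ) : Euc n :=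
  WithLp.toLp 2 (fun i : Fin n => ((k i : ℝ) + 1 / 2) * (2 : ℝ) ^ (-m))

/-- `∫_{D^c} K(z-y) dν(y)`, understood as `lim_{M→∞} ∫_{D^c ∩ {|z-y|<M}} K(z-y) dν(y)`. -/
def Ktail (d : ℕ) (K : Euc d → ℝ) (ν : Measure (Euc d)) (D : Set (Euc d)) (z : Euc d) : ℝ :=
  limUnder atTop fun M : ℝ => ∫ y in Dᶜ ∩ Metric.ball z M, K (z - y) ∂ν

/-- `E_D ν = ν(D)⁻¹ ∫_D ∫_{D^c} K(z-y) dν(y) dν(z)`. -/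
def cubeAvg (d : ℕ) (K : Euc d → ℝ) (ν : Measure (Euc d)) (D : Set (Euc d)) : ℝ :=
  ((ν D).toReal)⁻¹ * ∫ z in D, Ktail d K ν D z ∂ν

/-- The averaged martingale `E_m ν(x) = 2^{mn} ∫_{{a : x ∈ D_m^a}} E_{D_m^a} ν da`. -/
def Em (n d : ℕ) (h : n ≤ d) (K : Euc d → ℝ) (ν : Measure (Euc d)) (m : ℤ) (x : Euc d) : ℝ :=
  (2 : ℝ) ^ (m * (n : ℤ)) *
    ∫ a in {a : Euc n | x ∈ Dgrid n d h a m},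
      cubeAvg d K ν (Dgrid n d h a m) ∂(volume : Measure (Euc n))

/-- `Λ_m^ν(x,z;y) = 2^{mn} ∫_{{a : x,z ∈ D_m^a, y ∉ D_m^a}} ν(D_m^a)⁻¹ da`. -/
def LambdaM (n d : ℕ) (h : n ≤ d) (ν : Measure (Euc d)) (m : ℤ) (x z y : Euc d) : ℝ :=
  (2 : ℝ) ^ (m * (n : ℤ)) *
    ∫ a in {a : Euc n |
        x ∈ Dgrid n d h a m ∧ z ∈ Dgrid n d h a m ∧ y ∉ Dgrid n d h a m},
      ((ν (Dgrid n d h a m)).toReal)⁻¹ ∂(volume : Measure (Euc n))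

/-- The doubly truncated maximal singular integral
`T_*ν(x) = sup_{0<ε<M} |∫_{ε<|x-y|<M} K(x-y) dν(y)|`. -/
def Tstar (d : ℕ) (K : Euc d → ℝ) (ν : Measure (Euc d)) (x : Euc d) : ℝ≥0∞ :=
  ⨆ (ε : ℝ) (M : ℝ) (_ : 0 < ε) (_ : ε < M),
    ENNReal.ofReal |∫ y in {y : Euc d | ε < dist x y ∧ dist x y < M}, K (x - y) ∂ν|

/-- `(Kφ_ε ∗ ν)(x)`, understood as `lim_{M→∞} ∫_{|x-y|<M} φ_ε(x-y) K(x-y) dν(y)`. -/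
def KphiM (n d : ℕ) (h : n ≤ d) (φR : ℝ → ℝ) (K : Euc d → ℝ) (ν : Measure (Euc d))
    (ε : ℝ) (x : Euc d) : ℝ :=
  limUnder atTop fun M : ℝ =>
    ∫ y in Metric.ball x M, phiE n d h φR ε (x - y) * K (x - y) ∂ν

/-- An (affine) `n`-plane in `ℝ^d`. -/
def IsNPlane (n d : ℕ) (L : Set (Euc d)) : Prop :=
  ∃ (p : Euc d) (φ : Euc n →ₗᵢ[ℝ] Euc d), L = Set.range fun u => p + φ u

/-- The localized Wasserstein-type distance
`dist_F(σ,ν) = sup {|∫ g dσ - ∫ g dν| : Lip(g) ≤ 1, supp g ⊆ F}`. -/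
def wdist (d : ℕ) (F : Set (Euc d)) (σ ν : Measure (Euc d)) : ℝ≥0∞ :=
  ⨆ (g : Euc d → ℝ) (_ : LipschitzWith 1 g) (_ : Function.support g ⊆ F),
    ENNReal.ofReal |(∫ y, g y ∂σ) - ∫ y, g y ∂ν|

/-- The (topological) support of a measure. -/
def msupport (d : ℕ) (μ : Measure (Euc d)) : Set (Euc d) :=
  {x : Euc d | ∀ U : Set (Euc d), IsOpen U → x ∈ U → 0 < μ U}

open Classical in
/-- The coefficient `α_μ(Q)` of the v-cube `Q` with center `z` and side length `ℓ`. -/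
def alphaC (n d : ℕ) (h : n ≤ d) (CΓ : ℝ) (μ : Measure (Euc d)) (z : Euc n) (ℓ : ℝ) :
    ℝ≥0∞ :=
  if vQ n d h z ℓ ∩ msupport d μ = ∅ then 0
  else (ENNReal.ofReal (ℓ ^ (n + 1)))⁻¹ *
    ⨅ (c : ℝ≥0) (L : Set (Euc d)) (_ : IsNPlane n d L),
      wdist d (BQ n d h CΓ z ℓ) μ ((c : ℝ≥0∞) • (μH[(n : ℝ)]).restrict L)

/-- The coefficient `β_{2,μ}(Q)` of the v-cube `Q` with center `z` and side length `ℓ`. -/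
def beta2 (n d : ℕ) (h : n ≤ d) (CΓ : ℝ) (μ : Measure (Euc d)) (z : Euc n) (ℓ : ℝ) :
    ℝ≥0∞ :=
  ⨅ (L : Set (Euc d)) (_ : IsNPlane n d L),
    ((ENNReal.ofReal (ℓ ^ n))⁻¹ *
      ∫⁻ y in vQ n d h z (CΓ * ℓ),
        ENNReal.ofReal ((Metric.infDist y L / ℓ) ^ 2) ∂μ) ^ (1 / 2 : ℝ)

/-- The average `m_Q(g) = μ(Q)⁻¹ ∫_Q g dμ`. -/
def mAvg (d : ℕ) (μ : Measure (Euc d)) (Q : Set (Euc d)) (g : Euc d → ℝ) : ℝ :=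
  ((μ Q).toReal)⁻¹ * ∫ y in Q, g y ∂μ

/-- The Hardy–Littlewood maximal operator over v-cubes. -/
def maxHL (n d : ℕ) (h : n ≤ d) (μ : Measure (Euc d)) (g : Euc d → ℝ) (x : Euc d) : ℝ≥0∞ :=
  ⨆ (Q : Set (Euc d)) (_ : IsVCube n d h Q) (_ : x ∈ Q),
    ENNReal.ofReal (mAvg d μ Q fun y => |g y|)

/-- The sharp maximal operator over v-cubes. -/
def maxSharp (n d : ℕ) (h : n ≤ d) (μ : Measure (Euc d)) (g : Euc d → ℝ) (x : Euc d) :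
    ℝ≥0∞ :=
  ⨆ (Q : Set (Euc d)) (_ : IsVCube n d h Q) (_ : x ∈ Q),
    ENNReal.ofReal (mAvg d μ Q fun y => |g y - mAvg d μ Q g|)

/-- The centered Hardy–Littlewood maximal operator `M^ν`. -/
def maxB (d : ℕ) (ν : Measure (Euc d)) (f : Euc d → ℝ) (x : Euc d) : ℝ≥0∞ :=
  ⨆ (r : ℝ) (_ : 0 < r),
    (ν (Metric.ball x r))⁻¹ * ∫⁻ y in Metric.ball x r, ENNReal.ofReal |f y| ∂ν



/-- box lemmas -/
def boxOf {n : ℕ} (c : Euc n) (ε : ℝ) : Set (Euc n) :=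
  WithLp.ofLp ⁻¹' Set.univ.pi fun i => Set.Ioc (c i - ε) (c i)

lemma measurableSet_boxOf {n : ℕ} (c : Euc n) (ε : ℝ) : MeasurableSet (boxOf c ε) :=
  (MeasurableSet.univ_pi fun _ => measurableSet_Ioc).preimage (WithLp.measurable_ofLp 2 _)

lemma euc_vol_pi {n : ℕ} (s : Fin n → Set ℝ) (hs : ∀ i, MeasurableSet (s i)) :
    (volume : Measure (Euc n)) (WithLp.ofLp ⁻¹' Set.univ.pi s) = ∏ i, volume (s i) := by
  have h := (EuclideanSpace.volume_preserving_symm_measurableEquiv_toLp (Fin n)).measure_preimage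
      (MeasurableSet.univ_pi hs).nullMeasurableSet
  have h2 : (MeasurableEquiv.toLp 2 (Fin n → ℝ)).symm ⁻¹' (Set.univ.pi s) = WithLp.ofLp ⁻¹' Set.univ.pi s := rfl
  rw [h2] at h
  rw [h, volume_pi_pi]

lemma vol_boxOf {n : ℕ} (c : Euc n) {ε : ℝ} (hε : 0 ≤ ε) :
    (volume : Measure (Euc n)) (boxOf c ε) = ENNReal.ofReal (ε ^ n) := by
  rw [boxOf, euc_vol_pi _ fun _ => measurableSet_Ioc]
  have : ∀ i : Fin n, ENNReal.ofReal (c i - (c i - ε)) = ENNReal.ofReal ε := by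
    intro i; congr 1; ring
  simp only [Real.volume_Ioc, this]
  rw [Finset.prod_const, Finset.card_univ, Fintype.card_fin, ← ENNReal.ofReal_pow hε]

lemma vol_Ioc_diff (b c ε : ℝ) :
    (volume : Measure ℝ) (Set.Ioc (b - ε) b \ Set.Ioc (c - ε) c) ≤ ENNReal.ofReal |b - c| := by
  rcases le_total b c with hbc | hbc
  · have hsub : Set.Ioc (b - ε) b \ Set.Ioc (c - ε) c ⊆ Set.Ioc (b - ε) (c - ε) := by
      rintro t ⟨⟨h1, h2⟩, h3⟩
      simp only [Set.mem_Ioc, not_and, not_le] at h3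
      refine ⟨h1, ?_⟩
      by_contra hlt
      push_neg at hlt
      have := h3 hlt
      linarith
    calc (volume : Measure ℝ) _ ≤ volume (Set.Ioc (b - ε) (c - ε)) := measure_mono hsub
      _ = ENNReal.ofReal (c - ε - (b - ε)) := Real.volume_Ioc
      _ = ENNReal.ofReal |b - c| := by
          rw [abs_of_nonpos (by linarith)]; ring_nf
  · have hsub : Set.Ioc (b - ε) b \ Set.Ioc (c - ε) c ⊆ Set.Ioc c b := by
      rintro t ⟨⟨h1, h2⟩, h3⟩
      simp only [Set.mem_Ioc, not_and, not_le] at h3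
      refine ⟨?_, h2⟩
      by_contra hlt
      push_neg at hlt
      have := h3 (by linarith)
      linarith
    calc (volume : Measure ℝ) _ ≤ volume (Set.Ioc c b) := measure_mono hsub
      _ = ENNReal.ofReal (b - c) := Real.volume_Ioc
      _ = ENNReal.ofReal |b - c| := by rw [abs_of_nonneg (by linarith)]

lemma abs_coord_le_norm {d : ℕ} (v : Euc d) (i : Fin d) : |v i| ≤ ‖v‖ := by
  rw [EuclideanSpace.norm_eq]
  calc |v i| = Real.sqrt (‖v i‖ ^ 2) := by
        rw [Real.sqrt_sq_eq_abs, Real.norm_eq_abs, abs_abs]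
    _ ≤ Real.sqrt (∑ j, ‖v j‖ ^ 2) :=
        Real.sqrt_le_sqrt (Finset.single_le_sum (f := fun j => ‖v j‖ ^ 2) (fun j _ => sq_nonneg _) (Finset.mem_univ i))

lemma mem_boxOf {n : ℕ} {c : Euc n} {ε : ℝ} {a : Euc n} :
    a ∈ boxOf c ε ↔ ∀ i, c i - ε < a i ∧ a i ≤ c i := by
  constructor
  · intro h i; simpa using h i (Set.mem_univ i)
  · intro h i _; simpa using h i

lemma vol_boxOf_diff {n : ℕ} (c₁ c₂ : Euc n) {ε : ℝ} (hε : 0 ≤ ε) {r : ℝ} (hr0 : 0 ≤ r)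
    (hr : ∀ i, |c₁ i - c₂ i| ≤ r) :
    (volume : Measure (Euc n)) (boxOf c₁ ε \ boxOf c₂ ε)
      ≤ (n : ℝ≥0∞) * (ENNReal.ofReal r * ENNReal.ofReal (ε ^ (n - 1))) := by
  set g : Fin n → Set ℝ := fun j => Set.Ioc (c₁ j - ε) (c₁ j) with hg
  set W : Fin n → Set (Euc n) := fun i =>
    WithLp.ofLp ⁻¹' Set.univ.pi (Function.update g i (Set.Ioc (c₁ i - ε) (c₁ i) \ Set.Ioc (c₂ i - ε) (c₂ i)))
    with hW
  have hsub : boxOf c₁ ε \ boxOf c₂ ε ⊆ ⋃ i, W i := by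
    rintro a ⟨h1, h2⟩
    rw [mem_boxOf] at h1
    rw [mem_boxOf] at h2
    push_neg at h2
    obtain ⟨i, hi⟩ := h2
    refine Set.mem_iUnion.2 ⟨i, ?_⟩
    intro j _
    rcases eq_or_ne j i with rfl | hj
    · rw [Function.update_self]
      refine ⟨h1 j, ?_⟩
      intro hmem
      rcases Set.mem_Ioc.1 hmem with ⟨ha, hb⟩
      exact absurd (hi ha) (not_lt.2 hb)
    · rw [Function.update_of_ne hj]
      exact Set.mem_Ioc.2 (h1 j)
  have hWvol : ∀ i, (volume : Measure (Euc n)) (W i)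
      ≤ ENNReal.ofReal r * ENNReal.ofReal (ε ^ (n - 1)) := by
    intro i
    have hms : ∀ j, MeasurableSet
        (Function.update g i (Set.Ioc (c₁ i - ε) (c₁ i) \ Set.Ioc (c₂ i - ε) (c₂ i)) j) := by
      intro j
      rcases eq_or_ne j i with rfl | hj
      · rw [Function.update_self]; exact measurableSet_Ioc.diff measurableSet_Ioc
      · rw [Function.update_of_ne hj]; exact measurableSet_Ioc
    rw [hW]
    rw [euc_vol_pi _ hms]
    have hpt : ∀ j, (volume : Measure ℝ)
        (Function.update g i (Set.Ioc (c₁ i - ε) (c₁ i) \ Set.Ioc (c₂ i - ε) (c₂ i)) j)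
        = Function.update (fun j => (volume : Measure ℝ) (g j)) i
            ((volume : Measure ℝ) (Set.Ioc (c₁ i - ε) (c₁ i) \ Set.Ioc (c₂ i - ε) (c₂ i))) j := by
      intro j
      rcases eq_or_ne j i with rfl | hj
      · simp
      · simp [Function.update_of_ne hj]
    calc ∏ j, (volume : Measure ℝ)
          (Function.update g i (Set.Ioc (c₁ i - ε) (c₁ i) \ Set.Ioc (c₂ i - ε) (c₂ i)) j)
        = ∏ j, Function.update (fun j => (volume : Measure ℝ) (g j)) i
            ((volume : Measure ℝ) (Set.Ioc (c₁ i - ε) (c₁ i) \ Set.Ioc (c₂ i - ε) (c₂ i))) j :=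
          Finset.prod_congr rfl fun j _ => hpt j
      _ = (volume : Measure ℝ) (Set.Ioc (c₁ i - ε) (c₁ i) \ Set.Ioc (c₂ i - ε) (c₂ i)) *
            ∏ j ∈ Finset.univ \ {i}, (volume : Measure ℝ) (g j) :=
          Finset.prod_update_of_mem (Finset.mem_univ i) _ _
      _ ≤ ENNReal.ofReal r * ENNReal.ofReal (ε ^ (n - 1)) := by
          gcongr
          · exact (vol_Ioc_diff _ _ _).trans (ENNReal.ofReal_le_ofReal (hr i))
          · have : ∀ j ∈ Finset.univ \ {i}, (volume : Measure ℝ) (g j) = ENNReal.ofReal ε := by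
              intro j _
              rw [hg]
              simp only [Real.volume_Ioc]
              congr 1; ring
            rw [Finset.prod_congr rfl this, Finset.prod_const, Finset.card_sdiff_of_subset
              (Finset.singleton_subset_iff.2 (Finset.mem_univ i)), Finset.card_singleton,
              Finset.card_univ, Fintype.card_fin, ← ENNReal.ofReal_pow hε]
  calc (volume : Measure (Euc n)) (boxOf c₁ ε \ boxOf c₂ ε)
      ≤ (volume : Measure (Euc n)) (⋃ i, W i) := measure_mono hsub
    _ ≤ ∑ i, (volume : Measure (Euc n)) (W i) := measure_iUnion_fintype_le _ _
    _ ≤ ∑ _i : Fin n, ENNReal.ofReal r * ENNReal.ofReal (ε ^ (n - 1)) :=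
        Finset.sum_le_sum fun i _ => hWvol i
    _ = (n : ℝ≥0∞) * (ENNReal.ofReal r * ENNReal.ofReal (ε ^ (n - 1))) := by
        rw [Finset.sum_const, Finset.card_univ, Fintype.card_fin, nsmul_eq_mul]


lemma mem_Dgrid_iff {n d : ℕ} (h : n ≤ d) (a : Euc n) (m : ℤ) (w : Euc d) :
    w ∈ Dgrid n d h a m ↔ a ∈ boxOf (projn n d h w) ((2 : ℝ) ^ (-m)) := by
  rw [mem_boxOf]
  simp only [Dgrid, cubeSet, Set.mem_setOf_eq]
  constructor <;> intro H i <;> rcases H i with ⟨h1, h2⟩ <;> constructor <;> linarith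

lemma measurableSet_Dgrid {n d : ℕ} (h : n ≤ d) (a : Euc n) (m : ℤ) :
    MeasurableSet (Dgrid n d h a m) := by
  have heq : Dgrid n d h a m = ⋂ i : Fin n,
      ({w : Euc d | a i ≤ w (Fin.castLE h i)} ∩
        {w : Euc d | w (Fin.castLE h i) < a i + (2 : ℝ) ^ (-m)}) := by
    ext w
    simp only [Dgrid, cubeSet, Set.mem_setOf_eq, Set.mem_iInter, Set.mem_inter_iff, projn,
      WithLp.ofLp_toLp]
  rw [heq]
  have hev : ∀ j : Fin d, Measurable fun w : Euc d => w j := fun j =>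
    (measurable_pi_apply j).comp (WithLp.measurable_ofLp 2 _)
  exact MeasurableSet.iInter fun i =>
    (measurableSet_le measurable_const (hev _)).inter
      (measurableSet_lt (hev _) measurable_const)

/-- (Claim 4.1.) If `ν(D_m^a) ≥ c₀ 2^{-mn}` for all `a, m`, then
`0 ≤ Λ_m^ν(x,z;y) ≤ C 2^{mn}` and `Λ_m^ν` is `C 2^{m(n+1)}`-Lipschitz in `z`, with `C`
depending only on `n` and `c₀`. -/
theorem Lambda_bounds
    (n : ℕ) (hn : 0 < n) (c₀ : ℝ) (hc₀ : 0 < c₀) :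
    ∃ C : ℝ, 0 < C ∧
      ∀ (d : ℕ) (hnd : n < d) (ν : Measure (Euc d)),
        (∀ (a : Euc n) (m : ℤ),
          ENNReal.ofReal (c₀ * (2 : ℝ) ^ (-(m * (n : ℤ)))) ≤ ν (Dgrid n d hnd.le a m) ∧
            ν (Dgrid n d hnd.le a m) < ⊤) →
        ∀ (m : ℤ) (x y z z₁ z₂ : Euc d),
          (0 ≤ LambdaM n d hnd.le ν m x z y ∧
            LambdaM n d hnd.le ν m x z y ≤ C * (2 : ℝ) ^ (m * (n : ℤ))) ∧
          |LambdaM n d hnd.le ν m x z₁ y - LambdaM n d hnd.le ν m x z₂ y|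
            ≤ C * (2 : ℝ) ^ (m * ((n : ℤ) + 1)) * dist z₁ z₂ := by
  refine ⟨(2 * n + 1) / c₀, by positivity, ?_⟩
  intro d hnd ν hν m x y z z₁ z₂
  have h : n ≤ d := hnd.le
  set ε : ℝ := (2 : ℝ) ^ (-m) with hεdef
  have hε : 0 < ε := by positivity
  set K : ℝ := (c₀ * (2 : ℝ) ^ (-(m * (n : ℤ))))⁻¹ with hKdef
  have hKpos : 0 < K := by positivity
  -- σ-finiteness of ν
  haveI : SigmaFinite ν := by
    apply Measure.sigmaFinite_of_countable
      (S := Set.range fun k : Fin n → ℤ => Dgrid n d h (WithLp.toLp 2 fun i => (k i : ℝ)) 0)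
      (Set.countable_range _)
    · rintro s ⟨k, rfl⟩; exact (hν _ 0).2
    · apply Set.eq_univ_of_forall
      intro w
      rw [Set.sUnion_range]
      refine Set.mem_iUnion.2 ⟨fun i => ⌊projn n d h w i⌋, ?_⟩
      rw [mem_Dgrid_iff, mem_boxOf]
      intro i
      dsimp only [WithLp.ofLp_toLp]
      have h1 := Int.lt_floor_add_one (projn n d h w i)
      have h2 := Int.floor_le (projn n d h w i)
      have h3 : ((2 : ℝ) ^ (-(0 : ℤ))) = 1 := by norm_num
      constructor
      · rw [h3]; linarith
      · exact h2
  -- measurability of the integrand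
  have hE : MeasurableSet {p : Euc n × Euc d | p.2 ∈ Dgrid n d h p.1 m} := by
    have heq : {p : Euc n × Euc d | p.2 ∈ Dgrid n d h p.1 m} =
        ⋂ i : Fin n, ({p : Euc n × Euc d | p.1 i ≤ p.2 (Fin.castLE h i)} ∩
          {p : Euc n × Euc d | p.2 (Fin.castLE h i) < p.1 i + ε}) := by
      ext p
      simp only [Dgrid, cubeSet, Set.mem_setOf_eq, Set.mem_iInter, Set.mem_inter_iff, projn,
        hεdef, WithLp.ofLp_toLp]
    rw [heq]
    have hev1 : ∀ i : Fin n, Measurable fun p : Euc n × Euc d => p.1 i := fun i =>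
      ((measurable_pi_apply i).comp (WithLp.measurable_ofLp 2 _) : Measurable fun a : Euc n => a i).comp measurable_fst
    have hev2 : ∀ j : Fin d, Measurable fun p : Euc n × Euc d => p.2 j := fun j =>
      ((measurable_pi_apply j).comp (WithLp.measurable_ofLp 2 _) : Measurable fun w : Euc d => w j).comp measurable_snd
    exact MeasurableSet.iInter fun i =>
      (measurableSet_le (hev1 i) (hev2 _)).inter
        (measurableSet_lt (hev2 _) ((hev1 i).add_const ε))
  set g : Euc n → ℝ := fun a => ((ν (Dgrid n d h a m)).toReal)⁻¹ with hgdef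
  have hgmeas : Measurable g := by
    have h1 : Measurable fun a : Euc n =>
        ∫⁻ w, Set.indicator {p : Euc n × Euc d | p.2 ∈ Dgrid n d h p.1 m} 1 (a, w) ∂ν :=
      (measurable_one.indicator hE).lintegral_prod_right'
    have h2 : ∀ a : Euc n,
        (∫⁻ w, Set.indicator {p : Euc n × Euc d | p.2 ∈ Dgrid n d h p.1 m} 1 (a, w) ∂ν)
          = ν (Dgrid n d h a m) := by
      intro a
      have hfun : (fun w => Set.indicator {p : Euc n × Euc d | p.2 ∈ Dgrid n d h p.1 m}
          (1 : Euc n × Euc d → ℝ≥0∞) (a, w)) = Set.indicator (Dgrid n d h a m) 1 := by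
        funext w
        by_cases hw : w ∈ Dgrid n d h a m <;>
          simp [Set.indicator_apply, hw]
      rw [hfun, lintegral_indicator_one (measurableSet_Dgrid h a m)]
    have h3 : Measurable fun a : Euc n => ν (Dgrid n d h a m) := by
      have heq : (fun a : Euc n => ν (Dgrid n d h a m)) = fun a =>
          ∫⁻ w, Set.indicator {p : Euc n × Euc d | p.2 ∈ Dgrid n d h p.1 m} 1 (a, w) ∂ν :=
        funext fun a => (h2 a).symm
      rw [heq]; exact h1
    exact h3.ennreal_toReal.inv
  have hgnn : ∀ a, 0 ≤ g a := fun a => inv_nonneg.2 ENNReal.toReal_nonneg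
  have hgle : ∀ a, g a ≤ K := by
    intro a
    have h3 : c₀ * (2 : ℝ) ^ (-(m * (n : ℤ))) ≤ (ν (Dgrid n d h a m)).toReal :=
      (ENNReal.ofReal_le_iff_le_toReal (hν a m).2.ne).1 (hν a m).1
    rw [hKdef]
    exact inv_anti₀ (by positivity) h3
  have hgabs : ∀ a, |g a| ≤ K := fun a => by rw [abs_of_nonneg (hgnn a)]; exact hgle a
  have hεpow : ε ^ n = (2 : ℝ) ^ (-(m * (n : ℤ))) := by
    rw [hεdef, ← zpow_natCast ((2 : ℝ) ^ (-m)), ← zpow_mul]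
    congr 1; ring
  -- the sets
  set S : Euc d → Set (Euc n) := fun w =>
    (boxOf (projn n d h x) ε ∩ boxOf (projn n d h w) ε) ∩ (boxOf (projn n d h y) ε)ᶜ
    with hSdef
  have hSeq : ∀ w : Euc d,
      {a : Euc n | x ∈ Dgrid n d h a m ∧ w ∈ Dgrid n d h a m ∧ y ∉ Dgrid n d h a m} = S w := by
    intro w
    ext a
    simp only [Set.mem_setOf_eq, mem_Dgrid_iff h a m, hSdef, Set.mem_inter_iff,
      Set.mem_compl_iff]
    tauto
  have hSmeas : ∀ w, MeasurableSet (S w) := fun w =>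
    ((measurableSet_boxOf _ _).inter (measurableSet_boxOf _ _)).inter
      (measurableSet_boxOf _ _).compl
  have hSsub : ∀ w, S w ⊆ boxOf (projn n d h x) ε := fun w a ha => ha.1.1
  have hvolbox : (volume : Measure (Euc n)) (boxOf (projn n d h x) ε)
      = ENNReal.ofReal (ε ^ n) := vol_boxOf _ hε.le
  have hSvol : ∀ w, (volume : Measure (Euc n)) (S w) ≤ ENNReal.ofReal (ε ^ n) := fun w =>
    le_trans (measure_mono (hSsub w)) hvolbox.le
  -- generic bound on set integrals of g
  have hInt : ∀ (U : Set (Euc n)), MeasurableSet U → ∀ V : ℝ, 0 ≤ V →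
      (volume : Measure (Euc n)) U ≤ ENNReal.ofReal V → |∫ a in U, g a| ≤ K * V := by
    intro U hU V hV hvol
    have h1 : ‖∫ a in U, g a‖ ≤ K * ((volume : Measure (Euc n)) U).toReal :=
      norm_setIntegral_le_of_norm_le_const (lt_of_le_of_lt hvol ENNReal.ofReal_lt_top)
        (fun a _ => by rw [Real.norm_eq_abs]; exact hgabs a)
    rw [Real.norm_eq_abs] at h1
    exact h1.trans (mul_le_mul_of_nonneg_left (ENNReal.toReal_le_of_le_ofReal hV hvol) hKpos.le)
  have hpow_pos : (0 : ℝ) < (2 : ℝ) ^ (m * (n : ℤ)) := by positivity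
  have hKε : K * ε ^ n = c₀⁻¹ := by
    rw [hKdef, hεpow, mul_inv, mul_assoc,
      inv_mul_cancel₀ (ne_of_gt (by positivity : (0:ℝ) < (2 : ℝ) ^ (-(m * (n : ℤ))))), mul_one]
  have hLam : ∀ w : Euc d, LambdaM n d h ν m x w y
      = (2 : ℝ) ^ (m * (n : ℤ)) * ∫ a in S w, g a := by
    intro w
    rw [LambdaM, hSeq w]
  constructor
  · constructor
    · rw [hLam z]
      exact mul_nonneg hpow_pos.le (integral_nonneg hgnn)
    · rw [hLam z]
      have h2 : ∫ a in S z, g a ≤ K * ε ^ n :=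
        le_trans (le_abs_self _) (hInt (S z) (hSmeas z) (ε ^ n) (by positivity) (hSvol z))
      calc (2 : ℝ) ^ (m * (n : ℤ)) * ∫ a in S z, g a
          ≤ (2 : ℝ) ^ (m * (n : ℤ)) * (K * ε ^ n) :=
            mul_le_mul_of_nonneg_left h2 hpow_pos.le
        _ = c₀⁻¹ * (2 : ℝ) ^ (m * (n : ℤ)) := by rw [hKε]; ring
        _ ≤ (2 * n + 1) / c₀ * (2 : ℝ) ^ (m * (n : ℤ)) := by
            refine mul_le_mul_of_nonneg_right ?_ hpow_pos.le
            rw [div_eq_mul_inv]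
            nlinarith [inv_nonneg.2 hc₀.le]
  · -- Lipschitz part
    set r : ℝ := dist z₁ z₂ with hrdef
    have hrnn : 0 ≤ r := dist_nonneg
    have hd : ∀ i : Fin n, |projn n d h z₁ i - projn n d h z₂ i| ≤ r := by
      intro i
      have heq : projn n d h z₁ i - projn n d h z₂ i = (z₁ - z₂) (Fin.castLE h i) := by simp [projn]
      rw [heq, hrdef, dist_eq_norm]
      exact abs_coord_le_norm _ _
    have hd' : ∀ i : Fin n, |projn n d h z₂ i - projn n d h z₁ i| ≤ r := fun i => by
      rw [abs_sub_comm]; exact hd i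
    set V : ℝ := (n : ℝ) * (r * ε ^ (n - 1)) with hVdef
    have hVnn : 0 ≤ V := by positivity
    have hboxdiff : ∀ w₁ w₂ : Euc d, S w₁ \ S w₂ ⊆
        boxOf (projn n d h w₁) ε \ boxOf (projn n d h w₂) ε := by
      rintro w₁ w₂ a ⟨ha1, ha2⟩
      refine ⟨ha1.1.2, fun hmem => ha2 ⟨⟨ha1.1.1, hmem⟩, ha1.2⟩⟩
    have hcast : (n : ℝ≥0∞) * (ENNReal.ofReal r * ENNReal.ofReal (ε ^ (n - 1)))
        = ENNReal.ofReal V := by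
      rw [hVdef, ← ENNReal.ofReal_mul hrnn, ← ENNReal.ofReal_natCast n,
        ← ENNReal.ofReal_mul (by positivity)]
    have hvol12 : (volume : Measure (Euc n)) (S z₁ \ S z₂) ≤ ENNReal.ofReal V := by
      refine le_trans (measure_mono (hboxdiff z₁ z₂)) ?_
      rw [← hcast]
      exact vol_boxOf_diff _ _ hε.le hrnn hd
    have hvol21 : (volume : Measure (Euc n)) (S z₂ \ S z₁) ≤ ENNReal.ofReal V := by
      refine le_trans (measure_mono (hboxdiff z₂ z₁)) ?_
      rw [← hcast]
      exact vol_boxOf_diff _ _ hε.le hrnn hd'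
    have hIntBox : IntegrableOn g (boxOf (projn n d h x) ε) volume := by
      apply Measure.integrableOn_of_bounded (M := K)
      · rw [hvolbox]; exact ENNReal.ofReal_ne_top
      · exact hgmeas.aestronglyMeasurable
      · exact Filter.Eventually.of_forall fun a => by rw [Real.norm_eq_abs]; exact hgabs a
    have hI1 : ∫ a in S z₁, g a
        = (∫ a in S z₁ ∩ S z₂, g a) + ∫ a in S z₁ \ S z₂, g a :=
      (integral_inter_add_diff (hSmeas z₂) (hIntBox.mono_set (hSsub z₁))).symm
    have hI2 : ∫ a in S z₂, g a
        = (∫ a in S z₁ ∩ S z₂, g a) + ∫ a in S z₂ \ S z₁, g a := by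
      rw [Set.inter_comm]
      exact (integral_inter_add_diff (hSmeas z₁) (hIntBox.mono_set (hSsub z₂))).symm
    have t1 : |∫ a in S z₁ \ S z₂, g a| ≤ K * V :=
      hInt _ ((hSmeas z₁).diff (hSmeas z₂)) V hVnn hvol12
    have t2 : |∫ a in S z₂ \ S z₁, g a| ≤ K * V :=
      hInt _ ((hSmeas z₂).diff (hSmeas z₁)) V hVnn hvol21
    have hdiffint : |(∫ a in S z₁, g a) - ∫ a in S z₂, g a| ≤ 2 * (K * V) := by
      rw [hI1, hI2]
      have habs : |(∫ a in S z₁ \ S z₂, g a) - ∫ a in S z₂ \ S z₁, g a|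
          ≤ |∫ a in S z₁ \ S z₂, g a| + |∫ a in S z₂ \ S z₁, g a| := abs_sub _ _
      calc |((∫ a in S z₁ ∩ S z₂, g a) + ∫ a in S z₁ \ S z₂, g a)
            - ((∫ a in S z₁ ∩ S z₂, g a) + ∫ a in S z₂ \ S z₁, g a)|
          = |(∫ a in S z₁ \ S z₂, g a) - ∫ a in S z₂ \ S z₁, g a| := by ring_nf
        _ ≤ |∫ a in S z₁ \ S z₂, g a| + |∫ a in S z₂ \ S z₁, g a| := habs
        _ ≤ 2 * (K * V) := by linarith
    have hK2 : K = c₀⁻¹ * (2 : ℝ) ^ (m * (n : ℤ)) := by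
      rw [hKdef, mul_inv, zpow_neg, inv_inv]
    have key : (2 : ℝ) ^ (m * (n : ℤ)) * ((2 : ℝ) ^ (m * (n : ℤ)) * ε ^ (n - 1))
        = (2 : ℝ) ^ (m * ((n : ℤ) + 1)) := by
      rw [hεdef, ← zpow_natCast ((2 : ℝ) ^ (-m)), ← zpow_mul,
        ← zpow_add₀ (two_ne_zero), ← zpow_add₀ (two_ne_zero)]
      congr 1
      have hcast' : ((n - 1 : ℕ) : ℤ) = (n : ℤ) - 1 := by omega
      rw [hcast']; ring
    calc |LambdaM n d h ν m x z₁ y - LambdaM n d h ν m x z₂ y|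
        = (2 : ℝ) ^ (m * (n : ℤ)) * |(∫ a in S z₁, g a) - ∫ a in S z₂, g a| := by
          rw [hLam z₁, hLam z₂, ← mul_sub, abs_mul, abs_of_pos hpow_pos]
      _ ≤ (2 : ℝ) ^ (m * (n : ℤ)) * (2 * (K * V)) :=
          mul_le_mul_of_nonneg_left hdiffint hpow_pos.le
      _ = (2 * n * c₀⁻¹) * ((2 : ℝ) ^ (m * (n : ℤ))
            * ((2 : ℝ) ^ (m * (n : ℤ)) * ε ^ (n - 1))) * r := by
          rw [hK2, hVdef]; ring
      _ = (2 * n * c₀⁻¹) * (2 : ℝ) ^ (m * ((n : ℤ) + 1)) * r := by rw [key]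
      _ ≤ (2 * n + 1) / c₀ * (2 : ℝ) ^ (m * ((n : ℤ) + 1)) * r := by
          have hpp : (0 : ℝ) < (2 : ℝ) ^ (m * ((n : ℤ) + 1)) := by positivity
          have h1 : 2 * (n : ℝ) * c₀⁻¹ ≤ (2 * n + 1) / c₀ := by
            rw [div_eq_mul_inv]
            nlinarith [inv_nonneg.2 hc₀.le]
          exact mul_le_mul_of_nonneg_right
            (mul_le_mul_of_nonneg_right h1 hpp.le) hrnn
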